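/- arXiv:2308.15444 — 3 statements merged into one kernel-verified Lean document; each statement's English description precedes it below -/
import Mathlib

section
/- Let G be a graph and S a separator of G. Then S is an inclusion-wise minimal separator if and only if for every u ∈ S the set S∖{u} is not a separator of G. -/
open SimpleGraph

variable {V : Type*}

/-- `S` is an `a`-`b` separator: `a, b ∉ S` and they are in different components of `G - S`. -/
def IsABSep (G : SimpleGraph V) (S : Set V) (a b : V) : Prop :=
  ∃ (ha : a ∈ Sᶜ) (hb : b ∈ Sᶜ), ¬ (G.induce Sᶜ).Reachable ⟨a, ha⟩ ⟨b, hb⟩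

/-- `S` is a separator of `G`. -/
def IsSep (G : SimpleGraph V) (S : Set V) : Prop :=
  ∃ a b, IsABSep G S a b

/-- `S` is a minimal `a`-`b` separator: no proper subset is an `a`-`b` separator. -/
def IsMinABSep (G : SimpleGraph V) (S : Set V) (a b : V) : Prop :=
  IsABSep G S a b ∧ ∀ T ⊂ S, ¬ IsABSep G T a b

/-- `S` is an inclusion-wise minimal separator: no proper subset is a separator. -/
def IsInclMinSep (G : SimpleGraph V) (S : Set V) : Prop :=
  IsSep G S ∧ ∀ T ⊂ S, ¬ IsSep G T

/-- Reachability in an induced subgraph lifts to a larger induced subgraph. -/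
lemma reach_mono {G : SimpleGraph V} {A B : Set V} (h : A ⊆ B) {x y : V}
    (hx : x ∈ A) (hy : y ∈ A)
    (hr : (G.induce A).Reachable ⟨x, hx⟩ ⟨y, hy⟩) :
    (G.induce B).Reachable ⟨x, h hx⟩ ⟨y, h hy⟩ :=
  hr.map ⟨Set.inclusion h, fun hadj => hadj⟩

/-- A separator S is inclusion-wise minimal iff S \ {u} is not a separator for every u ∈ S. -/
theorem inclMinSep_iff_remove_one [Fintype V] (G : SimpleGraph V) (hG : G.Connected)
    (S : Set V) (hS : IsSep G S) :
    IsInclMinSep G S ↔ ∀ u ∈ S, ¬ IsSep G (S \ {u}) := by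
  constructor
  · rintro ⟨-, hmin⟩ u hu
    exact hmin _ ⟨Set.diff_subset, fun hsub => ((hsub hu).2 rfl)⟩
  · intro h
    refine ⟨hS, ?_⟩
    rintro T hT ⟨a', b', ha', hb', hnr⟩
    obtain ⟨a, b, ha, hb, -⟩ := hS
    have haT : a ∈ Tᶜ := fun haT => ha (hT.1 haT)
    -- one of a', b' is not reachable from a in G - T
    have key : ∃ (w : V) (hw : w ∈ Tᶜ),
        ¬ (G.induce Tᶜ).Reachable ⟨a, haT⟩ ⟨w, hw⟩ := by
      by_contra hcon
      push_neg at hcon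
      exact hnr ((hcon a' ha').symm.trans (hcon b' hb'))
    obtain ⟨w, hwT, hnw⟩ := key
    -- choose u ∈ S \ T with w ∉ S \ {u}
    have hex : ∃ u, u ∈ S ∧ u ∉ T ∧ w ∉ S \ {u} := by
      by_cases hwS : w ∈ S
      · exact ⟨w, hwS, hwT, fun hm => hm.2 rfl⟩
      · obtain ⟨u, huS, huT⟩ := Set.exists_of_ssubset hT
        exact ⟨u, huS, huT, fun hm => hwS hm.1⟩
    obtain ⟨u, huS, huT, hwSu⟩ := hex
    apply h u huS
    have haSu : a ∈ (S \ {u})ᶜ := fun hm => ha hm.1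
    have hwSu' : w ∈ (S \ {u})ᶜ := hwSu
    refine ⟨a, w, haSu, hwSu', fun hr => hnw ?_⟩
    have hsub : (S \ {u})ᶜ ⊆ Tᶜ := by
      intro x hx hxT
      exact hx ⟨hT.1 hxT, fun hxu => huT (hxu ▸ hxT)⟩
    exact reach_mono hsub haSu hwSu' hr
end

section
/- In the melon graph on 3n+2 vertices, for every choice function x assigning to each i ∈ {1,…,n} one vertex x_i ∈ {u_i, v_i, w_i}, the set {x_1,…,x_n} is an inclusion-wise minimal separator. Consequently the melon graph has at least 3^n inclusion-wise minimal separators. -/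
open SimpleGraph

variable {V : Type*}

/-- The melon graph on 3n+2 vertices: n disjoint paths u_i—v_i—w_i (encoded as
`Sum.inl (i, 0/1/2)`), a vertex a = `Sum.inr 0` adjacent to all u_i and a vertex
b = `Sum.inr 1` adjacent to all w_i. -/
def melon (n : ℕ) : SimpleGraph (Fin n × Fin 3 ⊕ Fin 2) :=
  SimpleGraph.fromRel (fun x y => ∃ i : Fin n,
    (x = Sum.inl (i, 0) ∧ y = Sum.inl (i, 1)) ∨
    (x = Sum.inl (i, 1) ∧ y = Sum.inl (i, 2)) ∨
    (x = Sum.inr 0 ∧ y = Sum.inl (i, 0)) ∨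
    (x = Sum.inr 1 ∧ y = Sum.inl (i, 2)))

section MelonAux

variable {n : ℕ}

lemma adj_au (i : Fin n) : (melon n).Adj (Sum.inr 0) (Sum.inl (i, 0)) := by
  rw [melon, SimpleGraph.fromRel_adj]
  exact ⟨by simp, Or.inl ⟨i, Or.inr (Or.inr (Or.inl ⟨rfl, rfl⟩))⟩⟩

lemma adj_uv (i : Fin n) : (melon n).Adj (Sum.inl (i, 0)) (Sum.inl (i, 1)) := by
  rw [melon, SimpleGraph.fromRel_adj]
  exact ⟨by simp, Or.inl ⟨i, Or.inl ⟨rfl, rfl⟩⟩⟩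

lemma adj_vw (i : Fin n) : (melon n).Adj (Sum.inl (i, 1)) (Sum.inl (i, 2)) := by
  rw [melon, SimpleGraph.fromRel_adj]
  exact ⟨by simp, Or.inl ⟨i, Or.inr (Or.inl ⟨rfl, rfl⟩)⟩⟩

lemma adj_bw (i : Fin n) : (melon n).Adj (Sum.inr 1) (Sum.inl (i, 2)) := by
  rw [melon, SimpleGraph.fromRel_adj]
  exact ⟨by simp, Or.inl ⟨i, Or.inr (Or.inr (Or.inr ⟨rfl, rfl⟩))⟩⟩

lemma step {T : Set (Fin n × Fin 3 ⊕ Fin 2)} {u v} (hu : u ∈ Tᶜ) (hv : v ∈ Tᶜ)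
    (h : (melon n).Adj u v) : ((melon n).induce Tᶜ).Reachable ⟨u, hu⟩ ⟨v, hv⟩ :=
  SimpleGraph.Adj.reachable h

private lemma reach_invariant {V : Type*} {G : SimpleGraph V} (f : V → Bool)
    (hf : ∀ u v, G.Adj u v → f u = f v) {u v : V} (h : G.Reachable u v) : f u = f v := by
  obtain ⟨w⟩ := h
  induction w with
  | nil => rfl
  | cons h p ih => exact (hf _ _ h).trans ih

lemma melon_sep (x : Fin n → Fin 3)
    (ha : (Sum.inr 0 : Fin n × Fin 3 ⊕ Fin 2) ∈ {v | ∃ i : Fin n, v = Sum.inl (i, x i)}ᶜ)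
    (hb : (Sum.inr 1 : Fin n × Fin 3 ⊕ Fin 2) ∈ {v | ∃ i : Fin n, v = Sum.inl (i, x i)}ᶜ) :
    ¬ ((melon n).induce {v | ∃ i : Fin n, v = Sum.inl (i, x i)}ᶜ).Reachable ⟨_, ha⟩ ⟨_, hb⟩ := by
  set S : Set (Fin n × Fin 3 ⊕ Fin 2) := {v | ∃ i : Fin n, v = Sum.inl (i, x i)} with hS
  intro hr
  set f : Fin n × Fin 3 ⊕ Fin 2 → Bool := fun v =>
    match v with
    | Sum.inl (i, k) => decide ((x i : ℕ) < (k : ℕ))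
    | Sum.inr j => decide (0 < (j : ℕ)) with hf
  have key : ∀ u v : ↥(Sᶜ), ((melon n).induce Sᶜ).Adj u v → f u.1 = f v.1 := by
    rintro ⟨u, hu⟩ ⟨v, hv⟩ huv
    have huv' : (melon n).Adj u v := huv
    rw [melon, SimpleGraph.fromRel_adj] at huv'
    have mem : ∀ (i : Fin n) (k : Fin 3), Sum.inl (i, k) ∉ S → (x i : ℕ) ≠ (k : ℕ) := by
      intro i k hk h
      exact hk ⟨i, by rw [show k = x i from Fin.ext h.symm]⟩
    obtain ⟨hne, h | h⟩ := huv' <;> obtain ⟨i, h | h | h | h⟩ := h <;>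
      obtain ⟨rfl, rfl⟩ := h <;>
      simp only [hf, decide_eq_decide] <;>
      (try have h1 := mem _ _ hu) <;> (try have h2 := mem _ _ hv) <;>
      have h3 : (x i : ℕ) < 3 := (x i).is_lt <;>
      simp only [Fin.isValue, Fin.val_zero, Fin.val_one, Fin.val_two,
        Nat.not_lt_zero, Nat.lt_irrefl, false_iff, iff_false, true_iff, iff_true, not_lt] at * <;> omega
  have := reach_invariant (fun v => f v.1) (by exact key) hr
  simp [hf] at this

lemma melon_conn (x : Fin n → Fin 3) {T : Set (Fin n × Fin 3 ⊕ Fin 2)}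
    (hT : T ⊂ {v | ∃ i : Fin n, v = Sum.inl (i, x i)}) :
    ∀ u v : ↥Tᶜ, ((melon n).induce Tᶜ).Reachable u v := by
  obtain ⟨hsub, hne⟩ := hT
  have memT : ∀ (i : Fin n) (k : Fin 3), Sum.inl (i, k) ∈ T → k = x i := by
    intro i k hk
    obtain ⟨j, hj⟩ := hsub hk
    obtain ⟨rfl, rfl⟩ : i = j ∧ k = x j := by
      constructor <;> [exact congrArg (fun v => Sum.elim (Prod.fst) (fun _ => i) v) hj;
        exact congrArg (fun v => Sum.elim (Prod.snd) (fun _ => k) v) hj]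
    rfl
  obtain ⟨j, hj⟩ : ∃ j : Fin n, Sum.inl (j, x j) ∉ T := by
    by_contra hc
    push_neg at hc
    exact hne (fun v hv => by obtain ⟨i, rfl⟩ := hv; exact hc i)
  have pathfree : ∀ k : Fin 3, Sum.inl (j, k) ∉ T := by
    intro k hk
    exact hj ((memT j k hk) ▸ hk)
  have haT : (Sum.inr 0 : Fin n × Fin 3 ⊕ Fin 2) ∈ Tᶜ := fun h => by
    obtain ⟨i, hi⟩ := hsub h; exact Sum.inr_ne_inl hi
  have hbT : (Sum.inr 1 : Fin n × Fin 3 ⊕ Fin 2) ∈ Tᶜ := fun h => by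
    obtain ⟨i, hi⟩ := hsub h; exact Sum.inr_ne_inl hi
  have reach_ba : ((melon n).induce Tᶜ).Reachable ⟨Sum.inr 1, hbT⟩ ⟨Sum.inr 0, haT⟩ :=
    ((step hbT (pathfree 2) (adj_bw j)).trans
      (step (pathfree 2) (pathfree 1) (adj_vw j).symm)).trans
      ((step (pathfree 1) (pathfree 0) (adj_uv j).symm).trans
        (step (pathfree 0) haT (adj_au j).symm))
  have reach_a : ∀ u : ↥Tᶜ, ((melon n).induce Tᶜ).Reachable u ⟨Sum.inr 0, haT⟩ := by
    rintro ⟨u, hu⟩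
    match u with
    | Sum.inr ⟨0, _⟩ => exact Reachable.refl _
    | Sum.inr ⟨1, _⟩ => exact reach_ba
    | Sum.inl (i, ⟨0, _⟩) => exact step hu haT (adj_au i).symm
    | Sum.inl (i, ⟨2, _⟩) => exact (step hu hbT (adj_bw i).symm).trans reach_ba
    | Sum.inl (i, ⟨1, _⟩) =>
      by_cases h0 : Sum.inl (i, (0 : Fin 3)) ∈ T
      · have h2 : Sum.inl (i, (2 : Fin 3)) ∉ T := by
          intro h2
          have e0 := memT i 0 h0
          have e2 := memT i 2 h2
          exact absurd (e0 ▸ e2) (by decide)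
        exact ((step hu h2 (adj_vw i)).trans (step h2 hbT (adj_bw i).symm)).trans reach_ba
      · exact (step hu h0 (adj_uv i).symm).trans (step h0 haT (adj_au i).symm)
  intro u v
  exact (reach_a u).trans (reach_a v).symm


lemma melon_inclMin (x : Fin n → Fin 3) :
    IsInclMinSep (melon n) {v | ∃ i : Fin n, v = Sum.inl (i, x i)} := by
  constructor
  · have ha : (Sum.inr 0 : Fin n × Fin 3 ⊕ Fin 2) ∈ {v | ∃ i : Fin n, v = Sum.inl (i, x i)}ᶜ :=
      fun ⟨i, hi⟩ => Sum.inr_ne_inl hi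
    have hb : (Sum.inr 1 : Fin n × Fin 3 ⊕ Fin 2) ∈ {v | ∃ i : Fin n, v = Sum.inl (i, x i)}ᶜ :=
      fun ⟨i, hi⟩ => Sum.inr_ne_inl hi
    exact ⟨Sum.inr 0, Sum.inr 1, ha, hb, melon_sep x ha hb⟩
  · rintro T hTs ⟨p, q, hp, hq, hnr⟩
    exact hnr (melon_conn x hTs ⟨p, hp⟩ ⟨q, hq⟩)

lemma melon_count :
    3 ^ n ≤ Set.ncard {S : Set (Fin n × Fin 3 ⊕ Fin 2) | IsInclMinSep (melon n) S} := by
  classical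
  set M := {S : Set (Fin n × Fin 3 ⊕ Fin 2) | IsInclMinSep (melon n) S}
  have hF : Function.Injective (fun y : Fin n → Fin 3 =>
      (⟨{v | ∃ i : Fin n, v = Sum.inl (i, y i)}, melon_inclMin y⟩ : M)) := by
    intro y z h
    simp only [Subtype.mk.injEq] at h
    funext i
    have : (Sum.inl (i, y i) : Fin n × Fin 3 ⊕ Fin 2) ∈
        {v | ∃ j : Fin n, v = Sum.inl (j, z j)} := h ▸ ⟨i, rfl⟩
    obtain ⟨j, hj⟩ := this
    obtain ⟨rfl, h2⟩ : i = j ∧ y i = z j := by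
      have := Sum.inl_injective hj
      exact ⟨congrArg Prod.fst this, congrArg Prod.snd this⟩
    exact h2
  calc 3 ^ n = Nat.card (Fin n → Fin 3) := by
        simp [Nat.card_eq_fintype_card]
    _ ≤ Nat.card M := Nat.card_le_card_of_injective _ hF
    _ = Set.ncard M := Nat.card_coe_set_eq M

end MelonAux

/-- In the melon graph, every transversal of the paths (one vertex from each path
{u_i, v_i, w_i}) is an inclusion-wise minimal separator; consequently the melon graph has
at least 3^n inclusion-wise minimal separators. -/

theorem melon_inclMinSeps (n : ℕ) (x : Fin n → Fin 3) :
    IsInclMinSep (melon n) {v | ∃ i : Fin n, v = Sum.inl (i, x i)} ∧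
    3 ^ n ≤ Set.ncard {S : Set (Fin n × Fin 3 ⊕ Fin 2) | IsInclMinSep (melon n) S} := by
  exact ⟨melon_inclMin x, melon_count⟩
end

section
/- There exists a family of graphs G_n on Θ(n) vertices in which the number of inclusion-wise minimal separators is O(n) while the number of minimal separators is at least 3^n: namely, the melon graph on 3n+2 vertices with a pendant neighbor attached to every vertex. -/
open SimpleGraph

variable {V : Type*}

/-- The melon graph with a pendant neighbor attached to each vertex: `(v, false)` is the
original vertex `v`, and `(v, true)` is its pendant neighbor. -/
def melonPendant (n : ℕ) : SimpleGraph ((Fin n × Fin 3 ⊕ Fin 2) × Bool) :=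
  SimpleGraph.fromRel (fun x y =>
    (x.2 = false ∧ y.2 = false ∧ (melon n).Adj x.1 y.1) ∨
    (x.1 = y.1 ∧ x.2 = false ∧ y.2 = true))

/-! ### Auxiliary lemmas -/

section Aux

variable {n : ℕ}

lemma melon_adj_01 (i : Fin n) : (melon n).Adj (.inl (i,0)) (.inl (i,1)) := by
  simp only [melon, fromRel_adj]
  exact ⟨by simp, Or.inl ⟨i, Or.inl (by simp)⟩⟩

lemma melon_adj_12 (i : Fin n) : (melon n).Adj (.inl (i,1)) (.inl (i,2)) := by
  simp only [melon, fromRel_adj]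
  exact ⟨by simp, Or.inl ⟨i, Or.inr (Or.inl (by simp))⟩⟩

lemma melon_adj_a0 (i : Fin n) : (melon n).Adj (.inr 0) (.inl (i,0)) := by
  simp only [melon, fromRel_adj]
  exact ⟨by simp, Or.inl ⟨i, Or.inr (Or.inr (Or.inl (by simp)))⟩⟩

lemma melon_adj_b2 (i : Fin n) : (melon n).Adj (.inr 1) (.inl (i,2)) := by
  simp only [melon, fromRel_adj]
  exact ⟨by simp, Or.inl ⟨i, Or.inr (Or.inr (Or.inr (by simp)))⟩⟩

lemma mp_adj_pendant (v : Fin n × Fin 3 ⊕ Fin 2) :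
    (melonPendant n).Adj (v, false) (v, true) := by
  simp only [melonPendant, fromRel_adj]
  exact ⟨by simp, Or.inl (Or.inr ⟨trivial, trivial, trivial⟩)⟩

lemma mp_adj_base {v w : Fin n × Fin 3 ⊕ Fin 2} (h : (melon n).Adj v w) :
    (melonPendant n).Adj (v, false) (w, false) := by
  simp only [melonPendant, fromRel_adj]
  exact ⟨by simp [h.ne], Or.inl (Or.inl ⟨trivial, trivial, h⟩)⟩

lemma mp_adj_true {v : Fin n × Fin 3 ⊕ Fin 2} {y : (Fin n × Fin 3 ⊕ Fin 2) × Bool}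
    (h : (melonPendant n).Adj (v, true) y) : y = (v, false) := by
  simp only [melonPendant, fromRel_adj] at h
  obtain ⟨hne, h | h⟩ := h
  · simp at h
  · rcases h with ⟨-, h, -⟩ | ⟨h1, h2, -⟩
    · simp at h
    · exact Prod.ext h1 h2

lemma reach_invariant_s7 {V' : Type*} {G' : SimpleGraph V'} (P : V' → Prop)
    (h : ∀ x y, G'.Adj x y → P x → P y) {x y : V'} (hr : G'.Reachable x y) : P x → P y := by
  obtain ⟨w⟩ := hr
  induction w with
  | nil => exact id
  | cons a _ ih => exact fun hx => ih (h _ _ a hx)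

lemma induce_adj_of {V : Type*} {G : SimpleGraph V} {S : Set V} {x y : V}
    (hx : x ∈ Sᶜ) (hy : y ∈ Sᶜ) (h : G.Adj x y) :
    (G.induce Sᶜ).Adj ⟨x, hx⟩ ⟨y, hy⟩ := by
  simpa using h

/-- The "a-side" predicate used to show that a transversal separates the two poles. -/
def sideP (f : Fin n → Fin 3) (u : Fin n × Fin 3 ⊕ Fin 2) : Prop :=
  u = Sum.inr 0 ∨ ∃ i j, u = Sum.inl (i, j) ∧ j < f i

lemma sideP_inl (f : Fin n → Fin 3) (i : Fin n) (j : Fin 3) :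
    sideP f (Sum.inl (i, j)) ↔ j < f i := by
  constructor
  · rintro (h | ⟨i', j', h, hlt⟩)
    · exact absurd h (by simp)
    · obtain ⟨rfl, rfl⟩ : i = i' ∧ j = j' := by simpa [Prod.ext_iff] using h
      exact hlt
  · exact fun h => Or.inr ⟨i, j, rfl, h⟩

lemma sideP_inr0 (f : Fin n → Fin 3) : sideP f (Sum.inr 0) := Or.inl rfl

lemma not_sideP_inr1 (f : Fin n → Fin 3) : ¬ sideP f (Sum.inr 1) := by
  simp [sideP]

lemma melon_side_aux {f : Fin n → Fin 3} {u w : Fin n × Fin 3 ⊕ Fin 2}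
    (hrel : ∃ i : Fin n,
      (u = Sum.inl (i, 0) ∧ w = Sum.inl (i, 1)) ∨
      (u = Sum.inl (i, 1) ∧ w = Sum.inl (i, 2)) ∨
      (u = Sum.inr 0 ∧ w = Sum.inl (i, 0)) ∨
      (u = Sum.inr 1 ∧ w = Sum.inl (i, 2)))
    (hu : ∀ i, u ≠ Sum.inl (i, f i)) (hw : ∀ i, w ≠ Sum.inl (i, f i)) :
    (sideP f u ↔ sideP f w) := by
  obtain ⟨i, ⟨hu', hw'⟩ | ⟨hu', hw'⟩ | ⟨hu', hw'⟩ | ⟨hu', hw'⟩⟩ := hrel <;> subst hu' hw'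
  · have h0 : (f i).val ≠ 0 := by
      intro h; exact hu i (by congr 2; exact (Fin.ext h.symm))
    have h1 : (f i).val ≠ 1 := by
      intro h; exact hw i (by congr 2; exact (Fin.ext h.symm))
    rw [sideP_inl, sideP_inl, Fin.lt_def, Fin.lt_def]
    have := (f i).isLt
    simp only [Fin.val_zero, Fin.val_one]
    omega
  · have h1 : (f i).val ≠ 1 := by
      intro h; exact hu i (by congr 2; exact (Fin.ext h.symm))
    have h2 : (f i).val ≠ 2 := by
      intro h; exact hw i (by congr 2; exact (Fin.ext h.symm))
    rw [sideP_inl, sideP_inl, Fin.lt_def, Fin.lt_def]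
    have := (f i).isLt
    simp only [Fin.val_one, Fin.val_two]
    omega
  · have h0 : (f i).val ≠ 0 := by
      intro h; exact hw i (by congr 2; exact (Fin.ext h.symm))
    rw [sideP_inl, Fin.lt_def]
    simp only [Fin.val_zero]
    constructor
    · intro _; omega
    · intro _; exact sideP_inr0 f
  · have h2 : (f i).val ≠ 2 := by
      intro h; exact hw i (by congr 2; exact (Fin.ext h.symm))
    rw [sideP_inl, Fin.lt_def]
    have := (f i).isLt
    simp only [Fin.val_two]
    constructor
    · intro h; exact absurd h (not_sideP_inr1 f)
    · intro h; omega

/-- The transversal set determined by `f`. -/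
def Sf (f : Fin n → Fin 3) : Set ((Fin n × Fin 3 ⊕ Fin 2) × Bool) :=
  {x | ∃ i, x = (Sum.inl (i, f i), false)}

lemma melon_side_adj {f : Fin n → Fin 3} {u w : Fin n × Fin 3 ⊕ Fin 2}
    (h : (melon n).Adj u w)
    (hu : ∀ i, u ≠ Sum.inl (i, f i)) (hw : ∀ i, w ≠ Sum.inl (i, f i)) :
    (sideP f u ↔ sideP f w) := by
  rw [melon, fromRel_adj] at h
  obtain ⟨-, h | h⟩ := h
  · exact melon_side_aux h hu hw
  · exact (melon_side_aux h hw hu).symm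

lemma notin_Sf {f : Fin n → Fin 3} {x : (Fin n × Fin 3 ⊕ Fin 2) × Bool}
    (hx : x ∉ Sf f) (hx2 : x.2 = false) : ∀ i, x.1 ≠ Sum.inl (i, f i) := by
  intro i he
  exact hx ⟨i, Prod.ext he hx2⟩

lemma side_pres {f : Fin n → Fin 3} (x y : ↥(Sf f)ᶜ)
    (h : ((melonPendant n).induce (Sf f)ᶜ).Adj x y) :
    sideP f x.val.1 → sideP f y.val.1 := by
  have hadj : (melonPendant n).Adj x.val y.val := h
  have hxS : x.val ∉ Sf f := x.2
  have hyS : y.val ∉ Sf f := y.2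
  rw [melonPendant, fromRel_adj] at hadj
  obtain ⟨-, h | h⟩ := hadj
  · obtain ⟨hx2, hy2, hm⟩ | ⟨he, -, -⟩ := h
    · exact (melon_side_adj hm (notin_Sf hxS hx2) (notin_Sf hyS hy2)).mp
    · rw [he]; exact id
  · obtain ⟨hy2, hx2, hm⟩ | ⟨he, -, -⟩ := h
    · exact (melon_side_adj hm (notin_Sf hyS hy2) (notin_Sf hxS hx2)).symm.mp
    · rw [← he]; exact id

lemma Sf_minABSep (f : Fin n → Fin 3) :
    IsMinABSep (melonPendant n) (Sf f) ((Sum.inr 0, false)) ((Sum.inr 1, false)) := by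
  constructor
  · have ha : ((Sum.inr 0 : Fin n × Fin 3 ⊕ Fin 2), false) ∈ (Sf f)ᶜ := by
      rintro ⟨i, h⟩; simp at h
    have hb : ((Sum.inr 1 : Fin n × Fin 3 ⊕ Fin 2), false) ∈ (Sf f)ᶜ := by
      rintro ⟨i, h⟩; simp at h
    refine ⟨ha, hb, fun hr => ?_⟩
    have := reach_invariant_s7 (fun z : ↥(Sf f)ᶜ => sideP f z.val.1) side_pres hr
      (sideP_inr0 f)
    exact not_sideP_inr1 f this
  · rintro T hT ⟨ha, hb, hnr⟩
    obtain ⟨x, hxS, hxT⟩ := Set.exists_of_ssubset hT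
    obtain ⟨i, rfl⟩ := hxS
    have key : ∀ k : Fin 3, ((Sum.inl (i, k) : Fin n × Fin 3 ⊕ Fin 2), false) ∈ Tᶜ := by
      intro k hk
      obtain ⟨i', he⟩ := hT.subset hk
      obtain ⟨h1, h2⟩ : (i = i' ∧ k = f i') := by simpa [Prod.ext_iff] using he
      subst h1; subst h2
      exact hxT hk
    exact hnr <| ((induce_adj_of ha (key 0) (mp_adj_base (melon_adj_a0 i))).reachable.trans
      (induce_adj_of (key 0) (key 1) (mp_adj_base (melon_adj_01 i))).reachable).trans
      ((induce_adj_of (key 1) (key 2) (mp_adj_base (melon_adj_12 i))).reachable.trans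
      (induce_adj_of hb (key 2) (mp_adj_base (melon_adj_b2 i))).reachable.symm)

lemma Sf_injective : Function.Injective (Sf (n := n)) := by
  intro f g h
  funext i
  have : ((Sum.inl (i, f i) : Fin n × Fin 3 ⊕ Fin 2), false) ∈ Sf g := h ▸ ⟨i, rfl⟩
  obtain ⟨i', he⟩ := this
  obtain ⟨h1, h2⟩ : (i = i' ∧ f i = g i') := by simpa [Prod.ext_iff] using he
  exact h1 ▸ h2

lemma Sf_isSep_zero : IsSep (melonPendant 0) (∅ : Set ((Fin 0 × Fin 3 ⊕ Fin 2) × Bool)) := by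
  have h := (Sf_minABSep (n := 0) Fin.elim0).1
  have he : Sf (n := 0) Fin.elim0 = ∅ := by
    ext x
    simp only [Sf, Set.mem_setOf_eq, Set.mem_empty_iff_false, iff_false]
    rintro ⟨i, -⟩
    exact i.elim0
  rw [he] at h
  exact ⟨_, _, h⟩

lemma singleton_sep (v : Fin n × Fin 3 ⊕ Fin 2) :
    IsSep (melonPendant n) {(v, false)} := by
  obtain ⟨w, hw⟩ : ∃ w : Fin n × Fin 3 ⊕ Fin 2, w ≠ v := by
    rcases v with u | k
    · exact ⟨Sum.inr 0, by simp⟩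
    · refine ⟨Sum.inr (k + 1), fun h => ?_⟩
      have : k + 1 = k := Sum.inr.inj h
      omega
  have ha : ((v, true) : _ × Bool) ∈
      ({((v, false) : (Fin n × Fin 3 ⊕ Fin 2) × Bool)} : Set _)ᶜ := by simp
  have hb : ((w, true) : _ × Bool) ∈
      ({((v, false) : (Fin n × Fin 3 ⊕ Fin 2) × Bool)} : Set _)ᶜ := by simp
  refine ⟨(v, true), (w, true), ha, hb, fun hr => ?_⟩
  have key : ∀ x y : ↥({((v, false) : (Fin n × Fin 3 ⊕ Fin 2) × Bool)} : Set _)ᶜ,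
      ((melonPendant n).induce _).Adj x y → x.val = (v, true) → y.val = (v, true) := by
    rintro x y hadj hx
    exfalso
    have : (melonPendant n).Adj (v, true) y.val := by
      have h' : (melonPendant n).Adj x.val y.val := hadj
      rwa [hx] at h'
    exact y.2 (mp_adj_true this)
  have := reach_invariant_s7 (fun z => z.val = (v, true)) key hr rfl
  exact hw (congrArg Prod.fst this)

lemma reach_root (hn : 0 < n) {S : Set ((Fin n × Fin 3 ⊕ Fin 2) × Bool)}
    (hS : ∀ v, ((v, false) : (Fin n × Fin 3 ⊕ Fin 2) × Bool) ∉ S) :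
    ∀ (x) (hx : x ∈ Sᶜ), ((melonPendant n).induce Sᶜ).Reachable ⟨x, hx⟩
      ⟨(Sum.inr 0, false), hS _⟩ := by
  have base : ∀ v, ((melonPendant n).induce Sᶜ).Reachable ⟨(v, false), hS v⟩
      ⟨(Sum.inr 0, false), hS _⟩ := by
    intro v
    rcases v with ⟨i, j⟩ | k
    · fin_cases j
      · exact (induce_adj_of (hS _) (hS _) (mp_adj_base (melon_adj_a0 i))).reachable.symm
      · exact (induce_adj_of (hS _) (hS _) (mp_adj_base (melon_adj_01 i))).reachable.symm.trans
          (induce_adj_of (hS _) (hS _) (mp_adj_base (melon_adj_a0 i))).reachable.symm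
      · exact (induce_adj_of (hS _) (hS _) (mp_adj_base (melon_adj_12 i))).reachable.symm.trans
          ((induce_adj_of (hS _) (hS _) (mp_adj_base (melon_adj_01 i))).reachable.symm.trans
          (induce_adj_of (hS _) (hS _) (mp_adj_base (melon_adj_a0 i))).reachable.symm)
    · fin_cases k
      · rfl
      · set i0 : Fin n := ⟨0, hn⟩
        exact (induce_adj_of (hS _) (hS _) (mp_adj_base (melon_adj_b2 i0))).reachable.trans
          ((induce_adj_of (hS _) (hS _) (mp_adj_base (melon_adj_12 i0))).reachable.symm.trans
          ((induce_adj_of (hS _) (hS _) (mp_adj_base (melon_adj_01 i0))).reachable.symm.trans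
          (induce_adj_of (hS _) (hS _) (mp_adj_base (melon_adj_a0 i0))).reachable.symm))
  rintro ⟨v, t⟩ hx
  cases t
  · exact base v
  · exact (induce_adj_of (hS v) hx (mp_adj_pendant v)).reachable.symm.trans (base v)

lemma pendant_only_not_sep (hn : 0 < n) {S : Set ((Fin n × Fin 3 ⊕ Fin 2) × Bool)}
    (hS : ∀ v, ((v, false) : (Fin n × Fin 3 ⊕ Fin 2) × Bool) ∉ S) :
    ¬ IsSep (melonPendant n) S := by
  rintro ⟨a, b, ha, hb, hnr⟩
  exact hnr ((reach_root hn hS a ha).trans (reach_root hn hS b hb).symm)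

end Aux

/-- A family of graphs on Θ(n) vertices with O(n) (here: at most 3n+2) inclusion-wise
minimal separators but at least 3^n minimal separators: the melon graph with a pendant
neighbor attached to every vertex. -/
theorem melonPendant_gap (n : ℕ) :
    Set.ncard {S : Set ((Fin n × Fin 3 ⊕ Fin 2) × Bool) | IsInclMinSep (melonPendant n) S}
      ≤ 3 * n + 2 ∧
    3 ^ n ≤ Set.ncard {S : Set ((Fin n × Fin 3 ⊕ Fin 2) × Bool) |
      ∃ a b, IsMinABSep (melonPendant n) S a b} := by
  constructor
  · rcases Nat.eq_zero_or_pos n with rfl | hn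
    · have hsub : {S : Set ((Fin 0 × Fin 3 ⊕ Fin 2) × Bool) | IsInclMinSep (melonPendant 0) S}
          ⊆ {(∅ : Set ((Fin 0 × Fin 3 ⊕ Fin 2) × Bool))} := by
        rintro S ⟨hsep, hmin⟩
        by_contra hne
        have hss : (∅ : Set ((Fin 0 × Fin 3 ⊕ Fin 2) × Bool)) ⊂ S :=
          (Set.empty_subset S).ssubset_of_ne (Ne.symm (by simpa using hne))
        exact hmin ∅ hss Sf_isSep_zero
      calc Set.ncard _ ≤ Set.ncard {(∅ : Set ((Fin 0 × Fin 3 ⊕ Fin 2) × Bool))} :=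
            Set.ncard_le_ncard hsub (Set.toFinite _)
        _ = 1 := Set.ncard_singleton _
        _ ≤ 3 * 0 + 2 := by norm_num
    · set F : (Fin n × Fin 3 ⊕ Fin 2) → Set ((Fin n × Fin 3 ⊕ Fin 2) × Bool) :=
        fun v => {(v, false)} with hF
      have hFinj : Function.Injective F := by
        intro v w h
        have : ((v, false) : (Fin n × Fin 3 ⊕ Fin 2) × Bool) ∈ F w := h ▸ rfl
        have hvw : v = w := by simpa [hF] using this
        exact hvw
      have hsub : {S : Set ((Fin n × Fin 3 ⊕ Fin 2) × Bool) | IsInclMinSep (melonPendant n) S}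
          ⊆ Set.range F := by
        rintro S ⟨hsep, hmin⟩
        have hv : ∃ v, ((v, false) : (Fin n × Fin 3 ⊕ Fin 2) × Bool) ∈ S := by
          by_contra h
          push_neg at h
          exact pendant_only_not_sep hn h hsep
        obtain ⟨v, hv⟩ := hv
        have hsub' : F v ⊆ S := Set.singleton_subset_iff.mpr hv
        by_cases he : F v = S
        · exact ⟨v, he⟩
        · exact absurd (singleton_sep v) (hmin _ (hsub'.ssubset_of_ne he))
      calc Set.ncard _ ≤ (Set.range F).ncard := Set.ncard_le_ncard hsub (Set.toFinite _)
        _ = Nat.card (Set.range F) := (Nat.card_coe_set_eq _).symm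
        _ = Nat.card (Fin n × Fin 3 ⊕ Fin 2) := Nat.card_range_of_injective hFinj
        _ = 3 * n + 2 := by
            simp [Nat.card_eq_fintype_card]
            ring
  · have hsub : Set.range (Sf (n := n)) ⊆
        {S : Set ((Fin n × Fin 3 ⊕ Fin 2) × Bool) |
          ∃ a b, IsMinABSep (melonPendant n) S a b} := by
      rintro S ⟨f, rfl⟩
      exact ⟨_, _, Sf_minABSep f⟩
    calc 3 ^ n = Nat.card (Fin n → Fin 3) := by simp
      _ = Nat.card (Set.range (Sf (n := n))) := (Nat.card_range_of_injective Sf_injective).symm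
      _ = (Set.range (Sf (n := n))).ncard := Nat.card_coe_set_eq _
      _ ≤ _ := Set.ncard_le_ncard hsub (Set.toFinite _)
end
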